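/- There exists K > 0 such that for all z ∈ (z_max, -z_max) with |ψ(z)| < ρ ψ_max, one has |ψ'(z)| > 1/K, where ψ(z) = -((β^2-1)z + βz^2 + z^3/3), z_max = 1-β, ψ_max = (1/3)(β-1)^2(β+2), and ρ ∈ (0,1) is fixed, for β ∈ (1,2] bounded away from 1. -/
import Mathlib


set_option maxHeartbeats 1000000 in
/-- Remark (rem-ref): for `β ∈ [1+δ, 2]`, uniformly on the sublevel set
`{z ∈ (z_max, -z_max) : |ψ(z)| < ρ ψ_max}` the derivative of `ψ` is bounded away
from zero: there exists `K > 0` with `|ψ'(z)| > 1/K`. -/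
theorem psi_deriv_lower_bound (δ ρ : ℝ) (hδ : 0 < δ) (hδ2 : 1 + δ ≤ 2)
    (hρ0 : 0 < ρ) (hρ1 : ρ < 1) :
    ∃ K > (0:ℝ), ∀ β : ℝ, 1 + δ ≤ β → β ≤ 2 →
      ∀ z : ℝ, 1 - β < z → z < β - 1 →
        |(fun z : ℝ => -((β^2 - 1) * z + β * z^2 + z^3/3)) z|
          < ρ * ((1/3) * (β - 1)^2 * (β + 2)) →
        1 / K < |deriv (fun z : ℝ => -((β^2 - 1) * z + β * z^2 + z^3/3)) z| := by
  have h1ρ : 0 < 1 - ρ := by linarith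
  refine ⟨5 / (3 * (1 - ρ) * δ^2), by positivity, ?_⟩
  intro β hβ1 hβ2 z hz1 hz2 habs
  -- compute the derivative
  have h2 : HasDerivAt (fun z : ℝ => z^2) (2*z) z := by simpa using hasDerivAt_pow 2 z
  have h3 : HasDerivAt (fun z : ℝ => z^3) (3*z^2) z := by simpa using hasDerivAt_pow 3 z
  have hd : HasDerivAt (fun z : ℝ => -((β^2 - 1) * z + β * z^2 + z^3/3))
      (-((β^2 - 1) + 2*β*z + z^2)) z := by
    have h := ((((hasDerivAt_id z).const_mul (β^2 - 1)).add
      (h2.const_mul β)).add (h3.div_const 3)).neg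
    have harg : -((β^2 - 1) + 2*β*z + z^2)
        = -((β^2 - 1) * 1 + β * (2*z) + 3*z^2 / 3) := by ring
    rw [harg]
    exact h
  rw [hd.deriv]
  -- the sublevel hypothesis
  simp only at habs
  have hψ : -((β^2 - 1) * z + β * z^2 + z^3/3) < ρ * ((1/3) * (β - 1)^2 * (β + 2)) :=
    lt_of_abs_lt habs
  -- set u = z + β - 1 ∈ (0, 2(β-1))
  set u : ℝ := z + β - 1 with hu_def
  have hu0 : 0 < u := by simp only [hu_def]; linarith
  have huu : u < 2 := by simp only [hu_def]; linarith
  -- key identity: ψ_max - ψ z = u^3/3 + u^2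
  have hkey : (1/3) * (β - 1)^2 * (β + 2) - (-((β^2 - 1) * z + β * z^2 + z^3/3))
      = u^3/3 + u^2 := by
    simp only [hu_def]; ring
  have hψmax : δ^2 ≤ (1/3) * (β - 1)^2 * (β + 2) := by nlinarith
  have hlow : (1 - ρ) * δ^2 < u^3/3 + u^2 := by nlinarith
  have hfac : 0 ≤ u * (2 - u) * (u + 5) :=
    mul_nonneg (mul_nonneg hu0.le (by linarith)) (by linarith)
  have hu_low : (3/10) * (1 - ρ) * δ^2 < u := by nlinarith
  -- derivative is negative; |deriv| = u^2 + 2u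
  have hprod : 0 < u * (u + 2) := mul_pos hu0 (by linarith)
  have hneg : -((β^2 - 1) + 2*β*z + z^2) < 0 := by
    simp only [hu_def] at hprod; nlinarith
  rw [abs_of_neg hneg, neg_neg]
  have hval : β^2 - 1 + 2*β*z + z^2 = u^2 + 2*u := by simp only [hu_def]; ring
  rw [hval, one_div_div]
  nlinarith [sq_nonneg u]
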